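/- In B[r] the identity η_R(a_3^2 + 2a_2a_4) − (a_3^2 + 2a_2a_4) = 3a_1·(a_4r + a_3r^2 + a_2r^3 + a_1r^4) holds. -/

import Mathlib

/-!
`Bbar = 𝔽_5[a_1,a_2,a_3,a_4]` (the variable `0,1,2,3 : Fin 4` are `a_1, a_2, a_3, a_4`),
`q(t) = t^5 + a_1t^4 + a_2t^3 + a_3t^2 + a_4t`, and `etaR : Bbar → Bbar[r]` is the
𝔽_5-algebra map sending `a_i` to the coefficient of `x^{5-i}` in `q(x+r) - q(r)`,
computed in `Bbar[r][x]`.  This is the reduction modulo `(5, a_5)` of the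
Gorbounov–Hopkins–Mahowald Hopf algebroid at the prime `5`.
-/

/-- The ring `B = 𝔽_5[a_1,a_2,a_3,a_4]`. -/
abbrev Bbar : Type := MvPolynomial (Fin 4) (ZMod 5)

/-- The generator `a_1`. -/
noncomputable def a1 : Bbar := MvPolynomial.X 0
/-- The generator `a_2`. -/
noncomputable def a2 : Bbar := MvPolynomial.X 1
/-- The generator `a_3`. -/
noncomputable def a3 : Bbar := MvPolynomial.X 2
/-- The generator `a_4`. -/
noncomputable def a4 : Bbar := MvPolynomial.X 3

/-- The polynomial `q(t) = t^5 + a_1t^4 + a_2t^3 + a_3t^2 + a_4t` as an element of `B[t]`. -/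
noncomputable def q : Polynomial Bbar :=
  Polynomial.X ^ 5 + Polynomial.C a1 * Polynomial.X ^ 4 + Polynomial.C a2 * Polynomial.X ^ 3 +
    Polynomial.C a3 * Polynomial.X ^ 2 + Polynomial.C a4 * Polynomial.X

/-- `q(x+r) - q(r)`, an element of `B[r][x]` (the inner variable is `r`, the outer is `x`). -/
noncomputable def qShift : Polynomial (Polynomial Bbar) :=
  Polynomial.eval₂ (Polynomial.C.comp Polynomial.C)
      (Polynomial.X + Polynomial.C Polynomial.X) q -
    Polynomial.eval₂ (Polynomial.C.comp Polynomial.C) (Polynomial.C Polynomial.X) q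

/-- The right unit `η_R : B → B[r]`, sending `a_i` (for `i = 1,2,3,4`) to the coefficient of
`x^{5-i}` in `q(x+r) - q(r)`. -/
noncomputable def etaR : Bbar →ₐ[ZMod 5] Polynomial Bbar :=
  MvPolynomial.aeval (fun k : Fin 4 => qShift.coeff (4 - k.1))


open Polynomial in
lemma qShift_eq : qShift =
    X ^ 5 + C (5 * X + C a1) * X ^ 4 + C (10 * X ^ 2 + 4 * C a1 * X + C a2) * X ^ 3 +
      C (10 * X ^ 3 + 6 * C a1 * X ^ 2 + 3 * C a2 * X + C a3) * X ^ 2 +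
      C (5 * X ^ 4 + 4 * C a1 * X ^ 3 + 3 * C a2 * X ^ 2 + 2 * C a3 * X + C a4) * X ^ 1 := by
  simp only [qShift, q, Polynomial.eval₂_add,
    Polynomial.eval₂_mul (R := Bbar) (S := Polynomial (Polynomial Bbar)),
    Polynomial.eval₂_pow (R := Bbar) (S := Polynomial (Polynomial Bbar)),
    Polynomial.eval₂_X, Polynomial.eval₂_C, RingHom.coe_comp, Function.comp_apply,
    map_add, map_mul, map_pow, map_ofNat]
  ring

lemma h5 : (5 : Polynomial Bbar) = 0 := by
  have : ((5:ℕ) : Polynomial Bbar) = 0 := by rw [CharP.cast_eq_zero]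
  exact_mod_cast this

open Polynomial in
lemma c1 : qShift.coeff 1 = C a4 + 2 * C a3 * X + 3 * C a2 * X ^ 2 + 4 * C a1 * X ^ 3 := by
  rw [qShift_eq]
  simp only [Polynomial.coeff_add, Polynomial.coeff_C_mul, Polynomial.coeff_X_pow]
  norm_num
  linear_combination (X ^ 4 : Polynomial Bbar) * h5

open Polynomial in
lemma c2 : qShift.coeff 2 = C a3 + 3 * C a2 * X + C a1 * X ^ 2 := by
  rw [qShift_eq]
  simp only [Polynomial.coeff_add, Polynomial.coeff_C_mul, Polynomial.coeff_X_pow]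
  norm_num
  linear_combination (2 * X ^ 3 + C a1 * X ^ 2 : Polynomial Bbar) * h5

open Polynomial in
lemma c3 : qShift.coeff 3 = C a2 + 4 * C a1 * X := by
  rw [qShift_eq]
  simp only [Polynomial.coeff_add, Polynomial.coeff_C_mul, Polynomial.coeff_X_pow]
  norm_num
  linear_combination (2 * X ^ 2 : Polynomial Bbar) * h5

/-- `η_R(a_3² + 2a_2a_4) − (a_3² + 2a_2a_4) = 3a_1·(a_4r + a_3r² + a_2r³ + a_1r⁴)` in `B[r]`. -/
theorem d1_a32 :
    etaR (a3 ^ 2 + 2 * a2 * a4) - Polynomial.C (a3 ^ 2 + 2 * a2 * a4) =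
      3 * Polynomial.C a1 *
        (Polynomial.C a4 * Polynomial.X + Polynomial.C a3 * Polynomial.X ^ 2 +
          Polynomial.C a2 * Polynomial.X ^ 3 + Polynomial.C a1 * Polynomial.X ^ 4) := by
  have h2 : etaR a2 = qShift.coeff 3 := by simp [etaR, a2]
  have h3 : etaR a3 = qShift.coeff 2 := by simp [etaR, a3]
  have h4 : etaR a4 = qShift.coeff 1 := by
    have e : 4 - ((3 : Fin 4) : ℕ) = 1 := rfl
    simp only [etaR, a4, MvPolynomial.aeval_X, e]
  rw [map_add, map_pow, map_mul, map_mul, map_ofNat, h2, h3, h4, c1, c2, c3, map_add,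
    map_mul, map_mul, map_pow, map_ofNat]
  linear_combination (Polynomial.C a2 * Polynomial.C a3 * Polynomial.X +
    Polynomial.C a2 * Polynomial.C a2 * Polynomial.X ^ 2 +
    Polynomial.C a1 * Polynomial.C a2 * Polynomial.X ^ 3 +
    Polynomial.C a3 * Polynomial.C a2 * Polynomial.X +
    3 * Polynomial.C a3 * Polynomial.C a1 * Polynomial.X ^ 2 +
    6 * Polynomial.C a2 * Polynomial.C a1 * Polynomial.X ^ 3 +
    2 * Polynomial.C a2 ^ 2 * Polynomial.X ^ 2 +
    Polynomial.C a1 * Polynomial.C a4 * Polynomial.X +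
    6 * Polynomial.C a1 ^ 2 * Polynomial.X ^ 4) * h5
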